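/- Let (Ω, 𝓕, μₚ) be a probability space, W : Ω → ℝ a nonnegative measurable function with ∫ W dμₚ = 1, μₜ = μₚ.withDensity W, and let R : Ω → ℝ be measurable with 0 ≤ R ≤ r_max and W·R integrable with respect to μₚ. Fix c > 0 and set W̄ = min(W, c). Then the bias of max-capped importance sampling satisfies the worst-case bounds 0 ≤ ∫ R dμₜ − ∫ W̄ · R dμₚ ≤ r_max · μₜ({ω : W ω > c}). In particular the capped estimator always underestimates the true expected reward. -/
import Mathlib


open MeasureTheory

/-- Worst-case bounds on the bias of max-capped importance sampling:
`0 ≤ ∫ R dμₜ − ∫ min(W,c)·R dμₚ ≤ r_max · μₜ({W > c})`.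
In particular the capped estimator always underestimates the true expected reward. -/
theorem cis_bias_bounds
    {Ω : Type*} [MeasurableSpace Ω] (μₚ : Measure Ω) [IsProbabilityMeasure μₚ]
    (W : Ω → ℝ) (hW_meas : Measurable W) (hW_nonneg : ∀ ω, 0 ≤ W ω)
    (hW_int : ∫ ω, W ω ∂μₚ = 1)
    (μₜ : Measure Ω) (hμₜ : μₜ = μₚ.withDensity (fun ω => ENNReal.ofReal (W ω)))
    (R : Ω → ℝ) (hR_meas : Measurable R)
    (r_max : ℝ) (hR_nonneg : ∀ ω, 0 ≤ R ω) (hR_le : ∀ ω, R ω ≤ r_max)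
    (hWR_int : Integrable (fun ω => W ω * R ω) μₚ)
    (c : ℝ) (hc : 0 < c) :
    0 ≤ ∫ ω, R ω ∂μₜ - ∫ ω, min (W ω) c * R ω ∂μₚ ∧
    ∫ ω, R ω ∂μₜ - ∫ ω, min (W ω) c * R ω ∂μₚ
      ≤ r_max * (μₜ {ω | W ω > c}).toReal := by
  -- W is integrable (otherwise its integral would be 0 ≠ 1)
  have hW_intble : Integrable W μₚ := by
    by_contra h
    rw [integral_undef h] at hW_int
    norm_num at hW_int
  obtain ⟨ω₀, -⟩ := nonempty_of_measure_ne_zero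
    (show μₚ Set.univ ≠ 0 by simp)
  have hr_max : 0 ≤ r_max := le_trans (hR_nonneg ω₀) (hR_le ω₀)
  -- ∫ R dμₜ = ∫ W·R dμₚ
  have h1 : ∫ ω, R ω ∂μₜ = ∫ ω, W ω * R ω ∂μₚ := by
    rw [hμₜ]
    have : (fun ω => ENNReal.ofReal (W ω)) = fun ω => ((W ω).toNNReal : ENNReal) := rfl
    rw [this, integral_withDensity_eq_integral_smul hW_meas.real_toNNReal]
    refine integral_congr_ae (Filter.Eventually.of_forall fun ω => ?_)
    simp [NNReal.smul_def, Real.coe_toNNReal _ (hW_nonneg ω)]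
  -- integrability of min W c * R
  have hmin_int : Integrable (fun ω => min (W ω) c * R ω) μₚ := by
    refine hWR_int.mono ((hW_meas.min measurable_const).mul hR_meas).aestronglyMeasurable
      (Filter.Eventually.of_forall fun ω => ?_)
    have h0 : 0 ≤ min (W ω) c := le_min (hW_nonneg ω) hc.le
    have := mul_le_mul_of_nonneg_right (min_le_left (W ω) c) (hR_nonneg ω)
    simp only [Real.norm_eq_abs, abs_of_nonneg (mul_nonneg h0 (hR_nonneg ω)),
      abs_of_nonneg (mul_nonneg (hW_nonneg ω) (hR_nonneg ω))]
    exact this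
  set S : Set Ω := {ω | W ω > c} with hS
  have hSm : MeasurableSet S := measurableSet_lt measurable_const hW_meas
  -- difference as one integral
  have h2 : ∫ ω, R ω ∂μₜ - ∫ ω, min (W ω) c * R ω ∂μₚ
      = ∫ ω, (W ω - min (W ω) c) * R ω ∂μₚ := by
    rw [h1, ← integral_sub hWR_int hmin_int]
    congr 1; funext ω; ring
  have hg_nonneg : ∀ ω, 0 ≤ (W ω - min (W ω) c) * R ω := fun ω =>
    mul_nonneg (sub_nonneg.mpr (min_le_left _ _)) (hR_nonneg ω)
  constructor
  · rw [h2]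
    exact integral_nonneg hg_nonneg
  · rw [h2]
    -- μₜ S in real terms
    have hμₜS : (μₜ S).toReal = ∫ ω, W ω ∂(μₚ.restrict S) := by
      rw [hμₜ, withDensity_apply _ hSm,
        ← ofReal_integral_eq_lintegral_ofReal (hW_intble.restrict)
          (Filter.Eventually.of_forall hW_nonneg),
        ENNReal.toReal_ofReal (integral_nonneg fun ω => hW_nonneg ω)]
    have hdom_int : Integrable (S.indicator (fun ω => r_max * W ω)) μₚ :=
      ((hW_intble.const_mul r_max)).indicator hSm
    have hle : ∀ ω, (W ω - min (W ω) c) * R ω ≤ S.indicator (fun ω => r_max * W ω) ω := by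
      intro ω
      by_cases hω : ω ∈ S
      · rw [Set.indicator_of_mem hω]
        have hω : W ω > c := hω
        have : min (W ω) c = c := min_eq_right hω.le
        rw [this, mul_comm r_max (W ω)]
        exact mul_le_mul (sub_le_self _ hc.le) (hR_le ω) (hR_nonneg ω) (hW_nonneg ω)
      · rw [Set.indicator_of_notMem hω]
        have hω' : ¬ W ω > c := hω
        have : min (W ω) c = W ω := min_eq_left (not_lt.mp hω')
        rw [this]; simp
    calc ∫ ω, (W ω - min (W ω) c) * R ω ∂μₚ
        ≤ ∫ ω, S.indicator (fun ω => r_max * W ω) ω ∂μₚ := by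
          refine integral_mono ?_ hdom_int hle
          exact (hWR_int.sub hmin_int).congr
            (Filter.Eventually.of_forall fun ω => by simp [Pi.sub_apply]; ring)
      _ = r_max * (μₜ S).toReal := by
          rw [integral_indicator hSm, hμₜS, ← integral_const_mul]
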